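/- Let Φ : ℝ^N → ℝ^P be linear with columns φ₁,…,φ_N, let x₀ ∈ ℝ^N with support I = supp(x₀), and assume the family (φ_i)_{i∈I} is linearly independent. Then the unique minimal-Euclidean-norm element of {p ∈ ℝ^P : Φ^*p ∈ aff(∂‖·‖₁(x₀))} is p_F = Φ_I (Φ_I^⊤ Φ_I)^{-1} sign(x₀)_I, where Φ_I is the submatrix of Φ formed by the columns indexed by I and sign(x₀)_I ∈ ℝ^{|I|} is the vector of signs of the entries of x₀ on I. -/

import Mathlib

open Matrix

/-- Euclidean dot product on `ℝ^n`. -/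
noncomputable def dotp {n : ℕ} (u v : Fin n → ℝ) : ℝ := ∑ i, u i * v i

/-- Euclidean (ℓ²) norm on `ℝ^n`. -/
noncomputable def nrm2 {n : ℕ} (u : Fin n → ℝ) : ℝ := Real.sqrt (∑ i, (u i) ^ 2)

/-- ℓ¹ norm on `ℝ^n`. -/
noncomputable def l1norm {n : ℕ} (u : Fin n → ℝ) : ℝ := ∑ i, |u i|

/-- ℓ^∞ norm of a finitely indexed real vector. -/
noncomputable def linf {ι : Type*} [Fintype ι] (u : ι → ℝ) : ℝ := ⨆ i, |u i|

/-- The sign function: 1 for positive, -1 for negative, 0 at 0. -/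
noncomputable def sgn (t : ℝ) : ℝ := if 0 < t then 1 else if t < 0 then -1 else 0

/-- Subdifferential of a finite-valued function `J : ℝ^n → ℝ` at `x`:
`∂J(x) = {η : J(x+δ) ≥ J(x) + ⟨η,δ⟩ for all δ}`. -/
def subdiff {n : ℕ} (J : (Fin n → ℝ) → ℝ) (x : Fin n → ℝ) : Set (Fin n → ℝ) :=
  {η | ∀ δ, J x + dotp η δ ≤ J (x + δ)}

/-- The model tangent subspace `T_x = Lin(∂J(x))^⊥`, where `Lin(E)` is the linear
space parallel to the affine hull of `E`. -/
def modelT {n : ℕ} (J : (Fin n → ℝ) → ℝ) (x : Fin n → ℝ) : Set (Fin n → ℝ) :=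
  {u | ∀ v ∈ (affineSpan ℝ (subdiff J x)).direction, dotp u v = 0}

/-- Support of `x` as a finite set of indices. -/
noncomputable def suppF {n : ℕ} (x : Fin n → ℝ) : Finset (Fin n) :=
  Finset.univ.filter fun i => x i ≠ 0

/-- The submatrix `Φ_I` of columns of `Φ` indexed by `I`. -/
noncomputable def colsub {N P : ℕ} (Φ : Matrix (Fin P) (Fin N) ℝ) (I : Finset (Fin N)) :
    Matrix (Fin P) ↥I ℝ := Φ.submatrix id (↑)

/-- The vector `p_F = Φ_I (Φ_I^⊤ Φ_I)⁻¹ s` for a sign vector `s` on `I`. -/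
noncomputable def pFvec {N P : ℕ} (Φ : Matrix (Fin P) (Fin N) ℝ) (I : Finset (Fin N))
    (s : ↥I → ℝ) : Fin P → ℝ :=
  (colsub Φ I).mulVec ((((colsub Φ I)ᵀ * (colsub Φ I))⁻¹).mulVec s)

/-- The irrepresentable-condition quantity `‖Φ_{I^c}^⊤ Φ_I (Φ_I^⊤Φ_I)⁻¹ s‖_∞`. -/
noncomputable def ICval {N P : ℕ} (Φ : Matrix (Fin P) (Fin N) ℝ) (I : Finset (Fin N))
    (s : ↥I → ℝ) : ℝ :=
  linf ((Φ.submatrix id ((↑) : {j // j ∉ I} → Fin N))ᵀ.mulVec (pFvec Φ I s))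

/-- The subdifferential of the ℓ¹ norm at `x`:
`{η : ‖η‖_∞ ≤ 1 and η_i = sign(x_i) on supp(x)}`. -/
noncomputable def l1subdiff {n : ℕ} (x : Fin n → ℝ) : Set (Fin n → ℝ) :=
  {η | linf η ≤ 1 ∧ ∀ i, x i ≠ 0 → η i = sgn (x i)}

section aux

open Matrix

lemma abs_sgn_le (t : ℝ) : |sgn t| ≤ 1 := by
  unfold sgn; split_ifs <;> simp

lemma linf_le_one {n : ℕ} {u : Fin n → ℝ} (h : ∀ i, |u i| ≤ 1) : linf u ≤ 1 :=
  Real.iSup_le (fun i => h i) zero_le_one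

lemma sgn_base_mem {n : ℕ} (x : Fin n → ℝ) :
    (fun i => sgn (x i)) ∈ l1subdiff x :=
  ⟨linf_le_one fun i => abs_sgn_le _, fun _ _ => rfl⟩

lemma mem_aff_of_eq_on_supp {n : ℕ} (x : Fin n → ℝ) (η : Fin n → ℝ)
    (h : ∀ i, x i ≠ 0 → η i = sgn (x i)) :
    η ∈ affineSpan ℝ (l1subdiff x) := by
  classical
  set η₀ : Fin n → ℝ := fun i => sgn (x i) with hη₀
  have hmem : η₀ ∈ affineSpan ℝ (l1subdiff x) :=
    subset_affineSpan ℝ _ (sgn_base_mem x)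
  have hdir : η - η₀ ∈ (affineSpan ℝ (l1subdiff x)).direction := by
    rw [direction_affineSpan]
    have hsum : η - η₀ = ∑ j, (η j - η₀ j) • (Pi.single j 1 : Fin n → ℝ) := by
      funext i
      simp [Finset.sum_apply, Pi.single_apply]
    rw [hsum]
    refine Submodule.sum_mem _ fun j _ => ?_
    by_cases hj : x j = 0
    · refine Submodule.smul_mem _ _ ?_
      have h1 : η₀ + Pi.single j (1 : ℝ) ∈ l1subdiff x := by
        constructor
        · refine linf_le_one fun i => ?_
          by_cases hij : i = j
          · subst hij
            simp [hη₀, sgn, hj]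
          · simpa [Pi.single_apply, hij] using abs_sgn_le (x i)
        · intro i hi
          have hij : i ≠ j := fun e => hi (e ▸ hj)
          simp [hη₀, Pi.single_apply, hij]
      have := vsub_mem_vectorSpan ℝ h1 (sgn_base_mem x)
      simpa [hη₀, vsub_eq_sub, add_sub_cancel_left] using this
    · have : η j - η₀ j = 0 := by
        rw [h j hj]; simp [hη₀]
      rw [this, zero_smul]
      exact Submodule.zero_mem _
  have := AffineSubspace.vadd_mem_of_mem_direction hdir hmem
  simpa [vsub_eq_sub] using this

lemma aff_subset_eq_on_supp {n : ℕ} (x : Fin n → ℝ) (μ : Fin n → ℝ)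
    (h : μ ∈ affineSpan ℝ (l1subdiff x)) (i : Fin n) (hi : x i ≠ 0) :
    μ i = sgn (x i) := by
  refine affineSpan_induction (p := fun μ => μ i = sgn (x i)) h
    (fun η hη => hη.2 i hi) ?_
  intro c u v w hu hv hw
  simp only [vsub_eq_sub, vadd_eq_add, Pi.add_apply, Pi.smul_apply, Pi.sub_apply,
    smul_eq_mul, hu, hv, hw]
  ring

end aux

/-- with `I = supp(x₀)` and linearly independent columns `(φ_i)_{i∈I}`,
the unique minimal-Euclidean-norm element of `{p : Φ^*p ∈ aff(∂‖·‖₁(x₀))}` is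
`p_F = Φ_I (Φ_I^⊤Φ_I)⁻¹ sign(x₀)_I`. -/
theorem stmt9 {N P : ℕ} (Φ : Matrix (Fin P) (Fin N) ℝ) (x₀ : Fin N → ℝ)
    (hli : LinearIndependent ℝ (fun i : ↥(suppF x₀) => Φᵀ (i : Fin N))) :
    pFvec Φ (suppF x₀) (fun i => sgn (x₀ i)) ∈
        {p : Fin P → ℝ | Φᵀ.mulVec p ∈ affineSpan ℝ (l1subdiff x₀)} ∧
      ∀ q ∈ {p : Fin P → ℝ | Φᵀ.mulVec p ∈ affineSpan ℝ (l1subdiff x₀)},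
        q ≠ pFvec Φ (suppF x₀) (fun i => sgn (x₀ i)) →
          nrm2 (pFvec Φ (suppF x₀) (fun i => sgn (x₀ i))) < nrm2 q := by
  classical
  set I := suppF x₀ with hI
  set A := colsub Φ I with hA
  set s : ↥I → ℝ := fun i => sgn (x₀ i) with hs
  set G := Aᵀ * A with hG
  -- A has injective mulVec
  have hAinj : Function.Injective A.mulVec := by
    rw [Matrix.mulVec_injective_iff]
    exact hli
  -- G is a unit
  have hGunit : IsUnit G := by
    rw [← Matrix.mulVec_injective_iff_isUnit]
    intro v w hvw
    apply hAinj
    have hd : G *ᵥ (v - w) = 0 := by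
      rw [Matrix.mulVec_sub, hvw, sub_self]
    have hAd : A *ᵥ (v - w) = 0 := by
      have hAH : Aᴴ = Aᵀ := by
        ext i j
        simp [Matrix.conjTranspose_apply]
      have h1 : star (A *ᵥ (v - w)) ⬝ᵥ (A *ᵥ (v - w)) = 0 := by
        have : star (v - w) ⬝ᵥ ((Aᴴ * A) *ᵥ (v - w)) = 0 := by
          rw [hAH, ← hG, hd, dotProduct_zero]
        rwa [← Matrix.mulVec_mulVec, Matrix.dotProduct_mulVec,
          Matrix.vecMul_conjTranspose, star_star] at this
      exact (dotProduct_star_self_eq_zero).mp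
        (by rwa [dotProduct_comm] at h1)
    have : A *ᵥ v - A *ᵥ w = 0 := by rwa [← Matrix.mulVec_sub]
    rw [sub_eq_zero] at this
    rw [this]
  have hGG : G * G⁻¹ = 1 := Matrix.mul_nonsing_inv _ (Matrix.isUnit_iff_isUnit_det _ |>.mp hGunit)
  set pF : Fin P → ℝ := pFvec Φ I s with hpF
  -- key identity : Aᵀ *ᵥ pF = s
  have hkey : Aᵀ *ᵥ pF = s := by
    rw [hpF]
    show Aᵀ *ᵥ (A *ᵥ (G⁻¹ *ᵥ s)) = s
    rw [Matrix.mulVec_mulVec, Matrix.mulVec_mulVec, ← hG, hGG,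
      Matrix.one_mulVec]
  -- coordinates of Φᵀ *ᵥ p on the support
  have hcoord : ∀ (p : Fin P → ℝ) (i : Fin N) (hi : i ∈ I),
      (Φᵀ *ᵥ p) i = (Aᵀ *ᵥ p) ⟨i, hi⟩ := by
    intro p i hi
    rfl
  have hmemI : ∀ i : Fin N, x₀ i ≠ 0 → i ∈ I := by
    intro i hi
    simp [hI, suppF, hi]
  -- membership of pF
  have hpFmem : Φᵀ.mulVec pF ∈ affineSpan ℝ (l1subdiff x₀) := by
    apply mem_aff_of_eq_on_supp
    intro i hi
    rw [hcoord pF i (hmemI i hi), hkey]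
  refine ⟨hpFmem, ?_⟩
  intro q hq hqne
  -- q also satisfies Aᵀ *ᵥ q = s
  have hq' : Aᵀ *ᵥ q = s := by
    funext j
    have hj : x₀ (j : Fin N) ≠ 0 := by
      have h2 := j.2
      simp only [hI, suppF, Finset.mem_filter] at h2
      exact h2.2
    have h3 := aff_subset_eq_on_supp x₀ _ hq j hj
    rw [hcoord q (j : Fin N) j.2] at h3
    exact h3
  set d : Fin P → ℝ := q - pF with hd
  have hdne : d ≠ 0 := sub_ne_zero.mpr hqne
  have hAtd : Aᵀ *ᵥ d = 0 := by
    rw [hd, Matrix.mulVec_sub, hq', hkey, sub_self]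
  -- orthogonality : ∑ k, pF k * d k = 0
  have horth : ∑ k, pF k * d k = 0 := by
    have h1 : pF ⬝ᵥ d = 0 := by
      rw [hpF]
      show (A *ᵥ (G⁻¹ *ᵥ s)) ⬝ᵥ d = 0
      rw [dotProduct_comm, Matrix.dotProduct_mulVec, ← Matrix.mulVec_transpose,
        hAtd, zero_dotProduct]
    simpa [dotProduct] using h1
  have hq_eq : ∀ k, q k = pF k + d k := by
    intro k; simp [hd]
  have hsum : ∑ k, (q k) ^ 2 = ∑ k, (pF k) ^ 2 + 2 * (∑ k, pF k * d k) + ∑ k, (d k) ^ 2 := by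
    simp_rw [hq_eq]
    rw [Finset.mul_sum, ← Finset.sum_add_distrib, ← Finset.sum_add_distrib]
    congr 1
    funext k
    ring
  have hdpos : 0 < ∑ k, (d k) ^ 2 := by
    obtain ⟨k, hk⟩ : ∃ k, d k ≠ 0 := by
      by_contra h
      push_neg at h
      exact hdne (funext h)
    exact Finset.sum_pos' (fun i _ => sq_nonneg _)
      ⟨k, Finset.mem_univ k, by positivity⟩
  have hlt : ∑ k, (pF k) ^ 2 < ∑ k, (q k) ^ 2 := by
    rw [hsum, horth]
    linarith
  have : nrm2 pF < nrm2 q := by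
    unfold nrm2
    exact Real.sqrt_lt_sqrt (Finset.sum_nonneg fun i _ => sq_nonneg _) hlt
  exact this
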